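/- arXiv:1606.06254 — 5 statements merged into one kernel-verified Lean document; each statement's English description precedes it below -/
import Mathlib

section
/- Let H = H1 ⊗ H2 where dim H1 = 2 and dim H2 = d. Let {|a_s⟩ ⊗ |b_s⟩ : s = 1,...,2d} be an orthonormal basis of H consisting of product vectors (an orthogonal product basis), where each |a_s⟩ ∈ H1 and |b_s⟩ ∈ H2 are unit vectors. Then for every s, the number of indices t ∈ {1,...,2d} with |a_t⟩ proportional to |a_s⟩ equals the number of indices t with ⟨a_s|a_t⟩ = 0. (Equivalently, each line [a] in the first factor occurs with the same multiplicity as its orthogonal complement line.) -/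
/-- Concrete tensor product of two vectors in Euclidean spaces. -/
noncomputable def tensor2 {ι κ : Type*} [Fintype ι] [Fintype κ]
    (a : EuclideanSpace ℂ ι) (b : EuclideanSpace ℂ κ) :
    EuclideanSpace ℂ (ι × κ) :=
  WithLp.toLp 2 (fun p : ι × κ => a p.1 * b p.2)

lemma inner_tensor2 {ι κ : Type*} [Fintype ι] [Fintype κ]
    (a a' : EuclideanSpace ℂ ι) (b b' : EuclideanSpace ℂ κ) :
    (inner ℂ (tensor2 a b) (tensor2 a' b') : ℂ) = inner ℂ a a' * inner ℂ b b' := by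
  simp only [PiLp.inner_apply, RCLike.inner_apply, tensor2]
  rw [Finset.sum_mul_sum, ← Finset.sum_product']
  apply Finset.sum_congr rfl
  intro p _
  simp [map_mul]; ring

lemma tensor2_smul_left {ι κ : Type*} [Fintype ι] [Fintype κ]
    (c : ℂ) (a : EuclideanSpace ℂ ι) (b : EuclideanSpace ℂ κ) :
    tensor2 (c • a) b = c • tensor2 a b := by
  ext p; simp [tensor2, mul_assoc]

lemma tensor2_smul_right {ι κ : Type*} [Fintype ι] [Fintype κ]
    (c : ℂ) (a : EuclideanSpace ℂ ι) (b : EuclideanSpace ℂ κ) :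
    tensor2 a (c • b) = c • tensor2 a b := by
  ext p; simp [tensor2]; ring

lemma tensor2_sum {ι κ : Type*} [Fintype ι] [Fintype κ] {σ : Type*}
    (a : EuclideanSpace ℂ ι) (f : σ → EuclideanSpace ℂ κ) (S : Finset σ) :
    tensor2 a (∑ t ∈ S, f t) = ∑ t ∈ S, tensor2 a (f t) := by
  ext p
  simp only [tensor2]
  rw [WithLp.ofLp_sum, WithLp.ofLp_sum, Finset.sum_apply, Finset.sum_apply, Finset.mul_sum]

lemma tensor2_cancel {ι κ : Type*} [Fintype ι] [Fintype κ]
    {a : EuclideanSpace ℂ ι} (hane : a ≠ 0) {v w : EuclideanSpace ℂ κ}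
    (h : tensor2 a v = tensor2 a w) : v = w := by
  obtain ⟨i, hi⟩ : ∃ i, a i ≠ 0 := by
    by_contra hc; push_neg at hc; exact hane (by ext i; simpa using hc i)
  ext j
  have := congrArg (fun z : EuclideanSpace ℂ (ι × κ) => z (i, j)) h
  simpa [tensor2, mul_comm, hi] using mul_left_cancel₀ hi this

/-- Orthogonal complement vector in dimension 2. -/
noncomputable def perp (a : EuclideanSpace ℂ (Fin 2)) : EuclideanSpace ℂ (Fin 2) :=
  WithLp.toLp 2 ![-(starRingEnd ℂ (a 1)), starRingEnd ℂ (a 0)]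

lemma inner_perp (a : EuclideanSpace ℂ (Fin 2)) : (inner ℂ a (perp a) : ℂ) = 0 := by
  simp [PiLp.inner_apply, RCLike.inner_apply, perp, Fin.sum_univ_two]
  ring

lemma norm_perp (a : EuclideanSpace ℂ (Fin 2)) : ‖perp a‖ = ‖a‖ := by
  simp [EuclideanSpace.norm_eq, Fin.sum_univ_two, perp, add_comm]

lemma mem_perp {a x : EuclideanSpace ℂ (Fin 2)} (hna : ‖a‖ = 1)
    (h : (inner ℂ a x : ℂ) = 0) : ∃ c : ℂ, x = c • perp a := by
  have h' : starRingEnd ℂ (a 0) * x 0 + starRingEnd ℂ (a 1) * x 1 = 0 := by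
    have h'' := h
    simp [PiLp.inner_apply, RCLike.inner_apply, Fin.sum_univ_two] at h''
    linear_combination h''
  by_cases h0 : a 0 = 0
  · have h1 : a 1 ≠ 0 := by
      intro h1; rw [show a = 0 from (by ext i; fin_cases i <;> simp [h0, h1])] at hna
      simp at hna
    have hx1 : x 1 = 0 := by
      rw [h0] at h'; simp at h'
      rcases h' with h' | h'
      · exact absurd h' h1
      · exact h'
    refine ⟨x 0 / (-(starRingEnd ℂ (a 1))), ?_⟩; ext i
    have hc1 : starRingEnd ℂ (a 1) ≠ 0 := by simpa using h1
    fin_cases i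
    · simp [perp, hx1, h0, smul_eq_mul]; field_simp
    · simp [perp, hx1, h0, smul_eq_mul]
  · have hc0 : starRingEnd ℂ (a 0) ≠ 0 := by simpa using h0
    refine ⟨x 1 / starRingEnd ℂ (a 0), ?_⟩; ext i
    fin_cases i
    · simp [perp, smul_eq_mul]; field_simp; linear_combination h'
    · simp [perp, smul_eq_mul]; field_simp

lemma perp_perp (a : EuclideanSpace ℂ (Fin 2)) : perp (perp a) = -a := by
  ext i; fin_cases i <;> simp [perp]

lemma key_expand (d : ℕ)
    (a : Fin (2 * d) → EuclideanSpace ℂ (Fin 2))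
    (b : Fin (2 * d) → EuclideanSpace ℂ (Fin d))
    (ha : ∀ s, ‖a s‖ = 1)
    (honb : Orthonormal ℂ (fun s => tensor2 (a s) (b s)))
    (hspan : Submodule.span ℂ (Set.range fun s => tensor2 (a s) (b s)) = ⊤)
    (u : EuclideanSpace ℂ (Fin 2)) (hu : ‖u‖ = 1) (S : Set (Fin (2 * d)))
    (v : EuclideanSpace ℂ (Fin d))
    (h1 : ∀ t ∈ S, ∃ c : ℂ, a t = c • u)
    (h2 : ∀ t ∉ S, (inner ℂ (a t) u : ℂ) * (inner ℂ (b t) v : ℂ) = 0) :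
    v ∈ Submodule.span ℂ (b '' S) := by
  classical
  have hexp : ∑ t, (inner ℂ (tensor2 (a t) (b t)) (tensor2 u v) : ℂ) • tensor2 (a t) (b t)
      = tensor2 u v := by
    simpa using (OrthonormalBasis.mk honb hspan.ge).sum_repr' (tensor2 u v)
  have huu : (inner ℂ u u : ℂ) = 1 := by
    rw [@inner_self_eq_norm_sq_to_K ℂ, hu]; norm_num
  have hune : u ≠ 0 := by intro h; rw [h] at hu; simp at hu
  have hsum : tensor2 u v
      = tensor2 u (∑ t ∈ Finset.univ.filter (· ∈ S), (inner ℂ (b t) v : ℂ) • b t) := by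
    rw [tensor2_sum]
    rw [← hexp, ← Finset.sum_filter_add_sum_filter_not Finset.univ (· ∈ S)]
    have hz : ∑ t ∈ Finset.univ.filter (¬ · ∈ S),
        (inner ℂ (tensor2 (a t) (b t)) (tensor2 u v) : ℂ) • tensor2 (a t) (b t) = 0 := by
      apply Finset.sum_eq_zero
      intro t ht
      simp only [Finset.mem_filter] at ht
      rw [inner_tensor2, h2 t ht.2, zero_smul]
    rw [hz, add_zero]
    apply Finset.sum_congr rfl
    intro t ht
    simp only [Finset.mem_filter] at ht
    obtain ⟨c, hc⟩ := h1 t ht.2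
    have hcnorm : ‖c‖ = 1 := by
      have := ha t
      rw [hc, norm_smul, hu, mul_one] at this
      exact this
    have hcc : starRingEnd ℂ c * c = 1 := by
      rw [Complex.conj_mul', ← Complex.ofReal_pow, hcnorm]; norm_num
    rw [hc, inner_tensor2, tensor2_smul_left, inner_smul_left, tensor2_smul_right, huu]
    rw [smul_smul, show (starRingEnd ℂ) c * 1 * (inner ℂ (b t) v : ℂ) * c = inner ℂ (b t) v by
      linear_combination (inner ℂ (b t) v : ℂ) * hcc]
  have hv : v = ∑ t ∈ Finset.univ.filter (· ∈ S), (inner ℂ (b t) v : ℂ) • b t :=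
    tensor2_cancel hune hsum
  rw [hv]
  exact Submodule.sum_mem _ fun t ht => Submodule.smul_mem _ _
    (Submodule.subset_span ⟨t, (Finset.mem_filter.mp ht).2, rfl⟩)

/-- In a `2 ⊗ d` orthogonal product basis, for every element `s`, the number of indices `t`
whose first factor is proportional to that of `s` equals the number of indices `t` whose
first factor is orthogonal to that of `s`. -/
theorem stmt0 (d : ℕ)
    (a : Fin (2 * d) → EuclideanSpace ℂ (Fin 2))
    (b : Fin (2 * d) → EuclideanSpace ℂ (Fin d))
    (ha : ∀ s, ‖a s‖ = 1) (hb : ∀ s, ‖b s‖ = 1)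
    (honb : Orthonormal ℂ (fun s => tensor2 (a s) (b s)))
    (hspan : Submodule.span ℂ (Set.range fun s => tensor2 (a s) (b s)) = ⊤)
    (s : Fin (2 * d)) :
    {t | ∃ c : ℂ, a t = c • a s}.ncard
      = {t | (inner ℂ (a s) (a t) : ℂ) = 0}.ncard := by
  classical
  set A := a s with hA
  set P : Set (Fin (2 * d)) := {t | ∃ c : ℂ, a t = c • a s} with hP
  set Q : Set (Fin (2 * d)) := {t | (inner ℂ (a s) (a t) : ℂ) = 0} with hQ
  set u' := perp A with hu'
  have hAn : ‖A‖ = 1 := ha s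
  have hu'n : ‖u'‖ = 1 := by rw [hu', norm_perp]; exact hAn
  have hAA : (inner ℂ A A : ℂ) = 1 := by
    rw [@inner_self_eq_norm_sq_to_K ℂ, hAn]; norm_num
  have hu'u' : (inner ℂ u' u' : ℂ) = 1 := by
    rw [@inner_self_eq_norm_sq_to_K ℂ, hu'n]; norm_num
  have hAu' : (inner ℂ A u' : ℂ) = 0 := inner_perp A
  have hPc : ∀ t ∈ P, ∃ c : ℂ, c ≠ 0 ∧ a t = c • A := by
    intro t ht
    obtain ⟨c, hc⟩ := ht
    refine ⟨c, ?_, hc⟩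
    intro h0
    have := ha t
    rw [hc, h0, zero_smul] at this
    simp at this
  have hQc : ∀ t ∈ Q, ∃ c : ℂ, c ≠ 0 ∧ a t = c • u' := by
    intro t ht
    obtain ⟨c, hc⟩ := mem_perp hAn ht
    refine ⟨c, ?_, hc⟩
    intro h0
    have := ha t
    rw [hc, h0, zero_smul] at this
    simp at this
  have horth : ∀ t r : Fin (2 * d), t ≠ r → (inner ℂ (a t) (a r) : ℂ) ≠ 0 →
      (inner ℂ (b t) (b r) : ℂ) = 0 := by
    intro t r hne hnz
    have h0 : (inner ℂ (tensor2 (a t) (b t)) (tensor2 (a r) (b r)) : ℂ) = 0 := honb.2 hne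
    rw [inner_tensor2] at h0
    exact (mul_eq_zero.mp h0).resolve_left hnz
  have hnotP : ∀ t, t ∉ P → (inner ℂ (a t) u' : ℂ) ≠ 0 := by
    intro t ht hz
    apply ht
    have hz' : (inner ℂ u' (a t) : ℂ) = 0 := by
      rw [← inner_conj_symm, hz, map_zero]
    obtain ⟨c, hc⟩ := mem_perp hu'n hz'
    rw [hu', perp_perp] at hc
    exact ⟨-c, by rw [hc]; simp [hA]⟩
  have hnotQ : ∀ t, t ∉ Q → (inner ℂ (a t) A : ℂ) ≠ 0 := by
    intro t ht hz
    apply ht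
    show (inner ℂ A (a t) : ℂ) = 0
    rw [← inner_conj_symm, hz, map_zero]
  have hspanPQ : Submodule.span ℂ (b '' P) ≤ Submodule.span ℂ (b '' Q) := by
    rw [Submodule.span_le]
    rintro _ ⟨t0, ht0, rfl⟩
    apply key_expand d a b ha honb hspan u' hu'n Q (b t0)
      (fun t ht => ⟨(hQc t ht).choose, (hQc t ht).choose_spec.2⟩)
    intro t ht
    by_cases htP : t ∈ P
    · obtain ⟨c, hc⟩ := htP
      rw [hc, inner_smul_left, hAu', mul_zero, zero_mul]
    · have hne : t ≠ t0 := by intro h; rw [h] at htP; exact htP ht0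
      have : (inner ℂ (a t) (a t0) : ℂ) ≠ 0 := by
        obtain ⟨c, hc0, hc⟩ := hPc t0 ht0
        rw [hc, inner_smul_right]
        exact mul_ne_zero hc0 (hnotQ t ht)
      rw [horth t t0 hne this, mul_zero]
  have hspanQP : Submodule.span ℂ (b '' Q) ≤ Submodule.span ℂ (b '' P) := by
    rw [Submodule.span_le]
    rintro _ ⟨t0, ht0, rfl⟩
    apply key_expand d a b ha honb hspan A hAn P (b t0) (fun t ht => ht)
    intro t ht
    by_cases htQ : t ∈ Q
    · have : (inner ℂ (a t) A : ℂ) = 0 := by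
        rw [← inner_conj_symm]
        rw [show (inner ℂ A (a t) : ℂ) = 0 from htQ, map_zero]
      rw [this, zero_mul]
    · have hne : t ≠ t0 := by intro h; rw [h] at htQ; exact htQ ht0
      have : (inner ℂ (a t) (a t0) : ℂ) ≠ 0 := by
        obtain ⟨c, hc0, hc⟩ := hQc t0 ht0
        rw [hc, inner_smul_right]
        exact mul_ne_zero hc0 (hnotP t ht)
      rw [horth t t0 hne this, mul_zero]
  have hspan_eq : Submodule.span ℂ (b '' P) = Submodule.span ℂ (b '' Q) :=
    le_antisymm hspanPQ hspanQP
  have honP : Orthonormal ℂ (fun t : ↥P => b t) := by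
    constructor
    · intro t; exact hb t
    · intro t r hne
      have hne' : (t : Fin (2 * d)) ≠ (r : Fin (2 * d)) := fun h => hne (Subtype.ext h)
      apply horth _ _ hne'
      obtain ⟨c, hc0, hc⟩ := hPc t t.2
      obtain ⟨c', hc0', hc'⟩ := hPc r r.2
      rw [hc, hc', inner_smul_left, inner_smul_right, hAA, mul_one]
      exact mul_ne_zero (by simpa using hc0) hc0'
  have honQ : Orthonormal ℂ (fun t : ↥Q => b t) := by
    constructor
    · intro t; exact hb t
    · intro t r hne
      have hne' : (t : Fin (2 * d)) ≠ (r : Fin (2 * d)) := fun h => hne (Subtype.ext h)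
      apply horth _ _ hne'
      obtain ⟨c, hc0, hc⟩ := hQc t t.2
      obtain ⟨c', hc0', hc'⟩ := hQc r r.2
      rw [hc, hc', inner_smul_left, inner_smul_right, hu'u', mul_one]
      exact mul_ne_zero (by simpa using hc0) hc0'
  have hcardP : P.ncard = Module.finrank ℂ (Submodule.span ℂ (b '' P)) := by
    rw [Set.image_eq_range, finrank_span_eq_card honP.linearIndependent,
      ← Nat.card_coe_set_eq, Nat.card_eq_fintype_card]
  have hcardQ : Q.ncard = Module.finrank ℂ (Submodule.span ℂ (b '' Q)) := by
    rw [Set.image_eq_range, finrank_span_eq_card honQ.linearIndependent,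
      ← Nat.card_coe_set_eq, Nat.card_eq_fintype_card]
  rw [hcardP, hcardQ, hspan_eq]
end

section
/- Let H = H1 ⊗ H' with dim H1 = 2 and H' = H2 ⊗ ... ⊗ Hn, and let {|a_{s,1}⟩ ⊗ |a'_s⟩ : s = 1,...,D} be an orthogonal product basis of H, where |a'_s⟩ ∈ H' is a product vector and D = dim H. Let E = {V_1,...,V_m} be a maximal subset of the set of lines {[a_{s,1}] : s} that does not contain any pair of mutually orthogonal lines. Then the vectors |a'_s⟩ for which [a_{s,1}] ∈ E form an orthonormal basis of H'. -/
/-- Let `{a_s ⊗ b_s}` be an orthogonal product basis of `ℂ² ⊗ H'` (with `dim H' = d`), and let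
`E` be a maximal set of lines among the `[a_s]` containing no pair of mutually orthogonal lines.
Then the vectors `b_s` for which `[a_s] ∈ E` form an orthonormal basis of `H'`. -/
theorem stmt3 (d : ℕ)
    (a : Fin (2 * d) → EuclideanSpace ℂ (Fin 2))
    (b : Fin (2 * d) → EuclideanSpace ℂ (Fin d))
    (ha : ∀ s, ‖a s‖ = 1) (hb : ∀ s, ‖b s‖ = 1)
    (honb : Orthonormal ℂ (fun s => tensor2 (a s) (b s)))
    (hspan : Submodule.span ℂ (Set.range fun s => tensor2 (a s) (b s)) = ⊤)
    (E : Set (Submodule ℂ (EuclideanSpace ℂ (Fin 2))))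
    (hE_sub : E ⊆ Set.range fun s => (ℂ ∙ a s))
    (hE_noorth : ∀ V ∈ E, ∀ W ∈ E, ¬ V ≤ Submodule.orthogonal W)
    (hE_max : ∀ s, (ℂ ∙ a s) ∉ E → Submodule.orthogonal (ℂ ∙ a s) ∈ E) :
    Orthonormal ℂ (fun t : {s : Fin (2 * d) // (ℂ ∙ a s) ∈ E} => b t)
      ∧ Submodule.span ℂ (b '' {s | (ℂ ∙ a s) ∈ E}) = ⊤ := by
  classical
  have ha0 : ∀ s, a s ≠ 0 := fun s h =>
    one_ne_zero (by rw [← ha s, h, norm_zero])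
  have hkey : ∀ s t, s ≠ t → (inner ℂ (a s) (a t) : ℂ) * inner ℂ (b s) (b t) = 0 := by
    intro s t hst
    have h := honb.2 hst
    rw [← inner_tensor2]
    exact h
  -- two lines in E are never orthogonal
  have h1 : ∀ s t, (ℂ ∙ a s) ∈ E → (ℂ ∙ a t) ∈ E → (inner ℂ (a s) (a t) : ℂ) ≠ 0 := by
    intro s t hs ht h0
    refine hE_noorth _ hs _ ht ?_
    exact (Submodule.span_singleton_le_iff_mem _ _).mpr
      (Submodule.mem_orthogonal_singleton_iff_inner_left.mpr h0)
  -- two lines outside E are never orthogonal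
  have h2 : ∀ s t, (ℂ ∙ a s) ∉ E → (ℂ ∙ a t) ∉ E → (inner ℂ (a s) (a t) : ℂ) ≠ 0 := by
    intro s t hs ht h0
    refine hE_noorth _ (hE_max s hs) _ (hE_max t ht) ?_
    rw [Submodule.orthogonal_orthogonal]
    have hat : a t ∈ (ℂ ∙ a s)ᗮ :=
      Submodule.mem_orthogonal_singleton_iff_inner_right.mpr h0
    have hle : (ℂ ∙ a t) ≤ (ℂ ∙ a s)ᗮ :=
      (Submodule.span_singleton_le_iff_mem _ _).mpr hat
    have hfr1 : Module.finrank ℂ (ℂ ∙ a t) = 1 := finrank_span_singleton (ha0 t)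
    have hfr2 : Module.finrank ℂ ((ℂ ∙ a s)ᗮ : Submodule ℂ (EuclideanSpace ℂ (Fin 2))) = 1 := by
      have h := Submodule.finrank_add_finrank_orthogonal (K := (ℂ ∙ a s))
      rw [finrank_span_singleton (ha0 s), finrank_euclideanSpace_fin] at h
      omega
    exact (Submodule.eq_of_le_of_finrank_eq hle (hfr1.trans hfr2.symm)).ge
  -- orthonormality of the two families
  have onb1 : Orthonormal ℂ (fun t : {s : Fin (2 * d) // (ℂ ∙ a s) ∈ E} => b t) := by
    constructor
    · intro i; exact hb i
    · intro i j hij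
      have hij' : (i : Fin (2 * d)) ≠ (j : Fin (2 * d)) := fun h => hij (Subtype.ext h)
      rcases mul_eq_zero.mp (hkey i j hij') with h | h
      · exact absurd h (h1 i j i.2 j.2)
      · exact h
  have onb2 : Orthonormal ℂ (fun t : {s : Fin (2 * d) // (ℂ ∙ a s) ∉ E} => b t) := by
    constructor
    · intro i; exact hb i
    · intro i j hij
      have hij' : (i : Fin (2 * d)) ≠ (j : Fin (2 * d)) := fun h => hij (Subtype.ext h)
      rcases mul_eq_zero.mp (hkey i j hij') with h | h
      · exact absurd h (h2 i j i.2 j.2)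
      · exact h
  -- counting
  have cardle1 : Fintype.card {s : Fin (2 * d) // (ℂ ∙ a s) ∈ E} ≤ d := by
    have h := onb1.linearIndependent.fintype_card_le_finrank
    rwa [finrank_euclideanSpace_fin] at h
  have cardle2 : Fintype.card {s : Fin (2 * d) // (ℂ ∙ a s) ∉ E} ≤ d := by
    have h := onb2.linearIndependent.fintype_card_le_finrank
    rwa [finrank_euclideanSpace_fin] at h
  have cardsum : Fintype.card {s : Fin (2 * d) // (ℂ ∙ a s) ∈ E}
      + Fintype.card {s : Fin (2 * d) // (ℂ ∙ a s) ∉ E} = 2 * d := by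
    rw [Fintype.card_subtype_compl]
    have hle := Fintype.card_subtype_le (fun s : Fin (2 * d) => (ℂ ∙ a s) ∈ E)
    rw [Fintype.card_fin] at hle ⊢
    omega
  have cardeq : Fintype.card {s : Fin (2 * d) // (ℂ ∙ a s) ∈ E} = d := by omega
  refine ⟨onb1, ?_⟩
  have hspan2 : Submodule.span ℂ
      (Set.range fun t : {s : Fin (2 * d) // (ℂ ∙ a s) ∈ E} => b t) = ⊤ :=
    onb1.linearIndependent.span_eq_top_of_card_eq_finrank'
      (by rw [finrank_euclideanSpace_fin]; exact cardeq)
  rw [Set.image_eq_range]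
  exact hspan2
end

section
/- Let u ⊗ v and x ⊗ y be two orthogonal product vectors in H1 ⊗ H2 (finite-dimensional Hilbert spaces) with u not proportional to x and v not proportional to y. Then any product vector in the 2-dimensional subspace spanned by u⊗v and x⊗y is proportional to u⊗v or to x⊗y. -/
/-- `y` is not proportional to `x`. -/
def NonProp {E : Type*} [AddCommGroup E] [Module ℂ E] (x y : E) : Prop :=
  ¬ ∃ c : ℂ, y = c • x

/-- If `v ∉ span {y}`, there is `w` orthogonal to `y` but not to `v`. -/
lemma exists_dual_vec {n : ℕ} (v y : EuclideanSpace ℂ (Fin n))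
    (h : v ∉ Submodule.span ℂ ({y} : Set (EuclideanSpace ℂ (Fin n)))) :
    ∃ w : EuclideanSpace ℂ (Fin n),
      (inner ℂ w y : ℂ) = 0 ∧ (inner ℂ w v : ℂ) ≠ 0 := by
  set K := Submodule.span ℂ ({y} : Set (EuclideanSpace ℂ (Fin n)))
  set w := v - (K.orthogonalProjectionOnto v : EuclideanSpace ℂ (Fin n)) with hw
  have hwmem : w ∈ Kᗮ := Submodule.sub_starProjection_mem_orthogonal v
  have hwy : (inner ℂ w y : ℂ) = 0 := by
    have := hwmem y (Submodule.mem_span_singleton_self y)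
    rwa [inner_eq_zero_symm] at this
  have hwne : w ≠ 0 := by
    intro h0
    apply h
    have : v = (K.orthogonalProjectionOnto v : EuclideanSpace ℂ (Fin n)) := by
      have := sub_eq_zero.mp h0
      exact this
    rw [this]
    exact (K.orthogonalProjectionOnto v).2
  refine ⟨w, hwy, ?_⟩
  have hproj : (inner ℂ w ((K.orthogonalProjectionOnto v : EuclideanSpace ℂ (Fin n))) : ℂ) = 0 := by
    rw [inner_eq_zero_symm]
    exact hwmem _ (K.orthogonalProjectionOnto v).2
  have : (inner ℂ w v : ℂ) = inner ℂ w w := by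
    have hv' : v = w + (K.orthogonalProjectionOnto v : EuclideanSpace ℂ (Fin n)) := by
      rw [hw]; abel
    rw [hv', inner_add_right, hproj, add_zero]
  rw [this]
  exact inner_self_ne_zero.mpr hwne

lemma contract_right {d₁ d₂ : ℕ}
    (u x p : EuclideanSpace ℂ (Fin d₁)) (v y q w : EuclideanSpace ℂ (Fin d₂))
    (a b : ℂ) (heq : tensor2 p q = a • tensor2 u v + b • tensor2 x y) :
    (inner ℂ w q : ℂ) • p = (a * (inner ℂ w v : ℂ)) • u + (b * (inner ℂ w y : ℂ)) • x := by
  have hij : ∀ i j, p i * q j = a * (u i * v j) + b * (x i * y j) := by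
    intro i j
    have := congrArg (fun f => f (i, j)) heq
    simpa [tensor2] using this
  ext i
  simp only [PiLp.add_apply, PiLp.smul_apply, smul_eq_mul, PiLp.inner_apply,
    RCLike.inner_apply]
  simp only [Finset.mul_sum, Finset.sum_mul]
  rw [← Finset.sum_add_distrib]
  apply Finset.sum_congr rfl
  intro j _
  linear_combination (starRingEnd ℂ) (w j) * hij i j

/-- If `c • p = s • u` with `s ≠ 0` and `u ≠ 0`, then `u` is a multiple of `p`. -/
lemma smul_eq_smul_aux {E : Type*} [AddCommGroup E] [Module ℂ E]
    {p u : E} {c s : ℂ} (h : c • p = s • u) (hs : s ≠ 0) (hu : u ≠ 0) :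
    ∃ r : ℂ, r ≠ 0 ∧ u = r • p := by
  have hc : c ≠ 0 := by
    intro h0
    rw [h0, zero_smul] at h
    exact hu (by simpa [hs] using (smul_eq_zero.mp h.symm).resolve_left hs)
  refine ⟨s⁻¹ * c, by simp [hs, hc], ?_⟩
  rw [mul_smul, h, inv_smul_smul₀ hs]

/-- Let `u ⊗ v` and `x ⊗ y` be orthogonal product vectors with `u` not proportional to `x` and
`v` not proportional to `y`. Then every product vector in their span is proportional to
`u ⊗ v` or to `x ⊗ y`. -/
theorem stmt8 (d₁ d₂ : ℕ)
    (u x : EuclideanSpace ℂ (Fin d₁)) (v y : EuclideanSpace ℂ (Fin d₂))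
    (hu : u ≠ 0) (hx : x ≠ 0) (hv : v ≠ 0) (hy : y ≠ 0)
    (horth : (inner ℂ (tensor2 u v) (tensor2 x y) : ℂ) = 0)
    (hnp₁ : NonProp u x) (hnp₂ : NonProp v y)
    (p : EuclideanSpace ℂ (Fin d₁)) (q : EuclideanSpace ℂ (Fin d₂))
    (hpq : tensor2 p q ≠ 0)
    (hmem : tensor2 p q ∈
      Submodule.span ℂ ({tensor2 u v, tensor2 x y} : Set (EuclideanSpace ℂ (Fin d₁ × Fin d₂)))) :
    (∃ t : ℂ, tensor2 p q = t • tensor2 u v) ∨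
    (∃ t : ℂ, tensor2 p q = t • tensor2 x y) := by
  rw [Submodule.mem_span_pair] at hmem
  obtain ⟨a, b, hab⟩ := hmem
  have heq : tensor2 p q = a • tensor2 u v + b • tensor2 x y := hab.symm
  by_cases hb : b = 0
  · left
    exact ⟨a, by rw [heq, hb, zero_smul, add_zero]⟩
  by_cases ha : a = 0
  · right
    exact ⟨b, by rw [heq, ha, zero_smul, zero_add]⟩
  exfalso
  -- y ∉ span {v} and v ∉ span {y}
  have hyv : y ∉ Submodule.span ℂ ({v} : Set (EuclideanSpace ℂ (Fin d₂))) := by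
    intro hmem'
    obtain ⟨c, hc⟩ := Submodule.mem_span_singleton.mp hmem'
    exact hnp₂ ⟨c, hc.symm⟩
  have hvy : v ∉ Submodule.span ℂ ({y} : Set (EuclideanSpace ℂ (Fin d₂))) := by
    intro hmem'
    obtain ⟨c, hc⟩ := Submodule.mem_span_singleton.mp hmem'
    have hc0 : c ≠ 0 := by
      intro h0; rw [h0, zero_smul] at hc; exact hv hc.symm
    exact hnp₂ ⟨c⁻¹, by rw [← hc, inv_smul_smul₀ hc0]⟩
  obtain ⟨w₁, hw₁y, hw₁v⟩ := exists_dual_vec v y hvy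
  obtain ⟨w₂, hw₂v, hw₂y⟩ := exists_dual_vec y v hyv
  have h₁ := contract_right u x p v y q w₁ a b heq
  have h₂ := contract_right u x p v y q w₂ a b heq
  rw [hw₁y, mul_zero, zero_smul, add_zero] at h₁
  rw [hw₂v, mul_zero, zero_smul, zero_add] at h₂
  obtain ⟨r, hr, hur⟩ := smul_eq_smul_aux h₁ (mul_ne_zero ha hw₁v) hu
  obtain ⟨t, ht, hxt⟩ := smul_eq_smul_aux h₂ (mul_ne_zero hb hw₂y) hx
  apply hnp₁
  refine ⟨t * r⁻¹, ?_⟩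
  rw [hxt, hur, smul_smul]
  congr 1
  field_simp
end

section
/- Define O(n) to be the set of 2^n × n matrices M over a set of formal vector variables such that: each entry in column j is a variable a or its formal perpendicular a^⊥ attached to column j; a variable and its perpendicular occur in at most one column; and any two distinct rows i, j satisfy M_{i,k} = (M_{j,k})^⊥ for some k (orthogonality of rows). For M ∈ O(n) and a variable a, let μ(a) be the number of occurrences of a in M. Then μ(a) = μ(a^⊥) for every vector variable a occurring in M. -/
open Finset Matrix

lemma involutive_bool_section {α : Type*} (f : α → α) (hinv : ∀ a, f (f a) = a)
    (hnfix : ∀ a, f a ≠ a) : ∃ g : α → Bool, ∀ a, g (f a) = !g a := by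
  classical
  let s : Setoid α := ⟨fun b c => c = b ∨ c = f b, by
    constructor
    · intro b; exact Or.inl rfl
    · intro b c h
      rcases h with h | h
      · exact Or.inl h.symm
      · right; rw [h, hinv]
    · intro b c d h1 h2
      rcases h1 with h1 | h1 <;> rcases h2 with h2 | h2 <;> subst h1 <;> subst h2
      · exact Or.inl rfl
      · exact Or.inr rfl
      · exact Or.inr rfl
      · exact Or.inl (hinv b)⟩
  refine ⟨fun b => decide (b = (Quotient.mk s b).out), fun b => ?_⟩
  have hq : (Quotient.mk s (f b)) = Quotient.mk s b := Quotient.sound (Or.inr (hinv b).symm)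
  show decide (f b = (Quotient.mk s (f b)).out) = !decide (b = (Quotient.mk s b).out)
  rw [hq]
  have ho : Setoid.r (α := α) ((Quotient.mk s b).out) b := Quotient.mk_out b
  set o : α := (Quotient.mk s b).out with hodef
  rcases ho with ho | ho
  · rw [← ho]
    simp [hnfix b]
  · have hbo : b ≠ o := by
      intro h
      exact hnfix o (by rw [← ho, h])
    have hfbo : f b = o := by rw [ho, hinv]
    simp [hbo, hfbo]

lemma key_sum (n : ℕ) (u : Fin (2 ^ n) → Fin n → Fin 2 → ℝ)
    (hunit : ∀ i j, u i j 0 ^ 2 + u i j 1 ^ 2 = 1)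
    (horth : ∀ i i', i ≠ i' → ∃ c, u i c 0 * u i' c 0 + u i c 1 * u i' c 1 = 0)
    (k : Fin n) :
    ∑ i, (u i k 0 ^ 2 - u i k 1 ^ 2) = 0 := by
  classical
  have hcard : Fintype.card (Fin n → Fin 2) = 2 ^ n := by simp
  let e : (Fin n → Fin 2) ≃ Fin (2 ^ n) := Fintype.equivFinOfCardEq hcard
  set R : Matrix (Fin (2 ^ n)) (Fin (2 ^ n)) ℝ :=
    Matrix.of (fun i y => ∏ j, u i j (e.symm y j)) with hR
  have hRapp : ∀ i x, R i (e x) = ∏ j, u i j (x j) := by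
    intro i x
    simp [hR, Equiv.symm_apply_apply]
  -- product formula for row inner products
  have hprod : ∀ i i' : Fin (2 ^ n), ∑ y, R i y * R i' y
      = ∏ j, (u i j 0 * u i' j 0 + u i j 1 * u i' j 1) := by
    intro i i'
    have h1 : ∑ y, R i y * R i' y = ∑ x : Fin n → Fin 2, (R i (e x) * R i' (e x)) :=
      (Equiv.sum_comp e fun y => R i y * R i' y).symm
    rw [h1]
    have h2 : ∀ x : Fin n → Fin 2, R i (e x) * R i' (e x)
        = ∏ j, (u i j (x j) * u i' j (x j)) := by
      intro x
      rw [hRapp, hRapp, ← Finset.prod_mul_distrib]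
    rw [Finset.sum_congr rfl fun x _ => h2 x]
    have h3 := Finset.prod_univ_sum (fun _ : Fin n => (univ : Finset (Fin 2)))
      (fun j t => u i j t * u i' j t)
    rw [Fintype.piFinset_univ] at h3
    rw [← h3]
    refine Finset.prod_congr rfl fun j _ => ?_
    rw [Fin.sum_univ_two]
  have hone : R * Rᵀ = 1 := by
    apply Matrix.ext_iff.mp
    intro i i'
    rw [Matrix.mul_apply]
    simp only [Matrix.transpose_apply]
    rw [hprod i i', Matrix.one_apply]
    by_cases h : i = i'
    · subst h
      rw [if_pos rfl]
      refine Finset.prod_eq_one fun j _ => ?_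
      have := hunit i j
      nlinarith [this]
    · obtain ⟨c, hc⟩ := horth i i' h
      rw [if_neg h]
      exact Finset.prod_eq_zero (mem_univ c) hc
  have hone' : Rᵀ * R = 1 := mul_eq_one_comm.mp hone
  have hcol : ∀ y, ∑ i, R i y * R i y = 1 := by
    intro y
    have h := Matrix.ext_iff.mpr hone' y y
    rw [Matrix.mul_apply, Matrix.one_apply, if_pos rfl] at h
    simpa [Matrix.transpose_apply] using h
  -- the signed sum
  set φ : Fin 2 → ℝ := fun t => if t = 0 then 1 else -1 with hφ
  have hφ0 : φ 0 = 1 := by simp [hφ]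
  have hφ1 : φ 1 = -1 := by simp [hφ]
  have way1 : ∑ x : Fin n → Fin 2, φ (x k) * ∑ i, R i (e x) * R i (e x) = 0 := by
    have h1 : ∀ x : Fin n → Fin 2, φ (x k) * ∑ i, R i (e x) * R i (e x) = φ (x k) := by
      intro x; rw [hcol (e x), mul_one]
    rw [Finset.sum_congr rfl fun x _ => h1 x]
    have h2 : ∀ x : Fin n → Fin 2, φ (x k) = ∏ j, (if j = k then φ (x j) else 1) := by
      intro x
      rw [Finset.prod_ite_eq' univ k (fun j => φ (x j)), if_pos (mem_univ k)]
    rw [Finset.sum_congr rfl fun x _ => h2 x]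
    have h3 := Finset.prod_univ_sum (fun _ : Fin n => (univ : Finset (Fin 2)))
      (fun j t => if j = k then φ t else 1)
    rw [Fintype.piFinset_univ] at h3
    rw [← h3]
    apply Finset.prod_eq_zero (mem_univ k)
    rw [Fin.sum_univ_two, if_pos rfl, if_pos rfl, hφ0, hφ1]
    ring
  have way2 : ∑ x : Fin n → Fin 2, φ (x k) * ∑ i, R i (e x) * R i (e x)
      = ∑ i, (u i k 0 ^ 2 - u i k 1 ^ 2) := by
    have hswap : ∑ x : Fin n → Fin 2, φ (x k) * ∑ i, R i (e x) * R i (e x)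
        = ∑ i, ∑ x : Fin n → Fin 2, φ (x k) * (R i (e x) * R i (e x)) := by
      simp_rw [Finset.mul_sum]
      exact Finset.sum_comm
    rw [hswap]
    refine Finset.sum_congr rfl fun i _ => ?_
    have h1 : ∀ x : Fin n → Fin 2, φ (x k) * (R i (e x) * R i (e x))
        = ∏ j, ((if j = k then φ (x j) else 1) * (u i j (x j) * u i j (x j))) := by
      intro x
      rw [Finset.prod_mul_distrib,
        Finset.prod_ite_eq' univ k (fun j => φ (x j)), if_pos (mem_univ k),
        hRapp, ← Finset.prod_mul_distrib]
    rw [Finset.sum_congr rfl fun x _ => h1 x]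
    have h3 := Finset.prod_univ_sum (fun _ : Fin n => (univ : Finset (Fin 2)))
      (fun j t => (if j = k then φ t else 1) * (u i j t * u i j t))
    rw [Fintype.piFinset_univ] at h3
    rw [← h3]
    rw [Finset.prod_eq_single_of_mem k (mem_univ k)]
    · rw [Fin.sum_univ_two, if_pos rfl, if_pos rfl, hφ0, hφ1]
      ring
    · intro j _ hj
      rw [Fin.sum_univ_two, if_neg hj, if_neg hj, one_mul, one_mul]
      have := hunit i j
      nlinarith [this]
  rw [← way2, way1]

/-- In the combinatorial model `O(n)` of multiqubit orthogonal product bases — a `2^n × n`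
matrix whose column `j` takes values in a type `V j` equipped with a fixed-point-free
involution `a ↦ aᗮ`, such that any two distinct rows have perpendicular entries in some
column — every value `a` occurring in a column occurs there exactly as many times as its
perpendicular `aᗮ`. -/
theorem stmt9 (n : ℕ) (V : Fin n → Type) (perp : ∀ j, V j → V j)
    (hinv : ∀ j a, perp j (perp j a) = a)
    (hnfix : ∀ j a, perp j a ≠ a)
    (M : Fin (2 ^ n) → ∀ j, V j)
    (horth : ∀ i i', i ≠ i' → ∃ k, M i k = perp k (M i' k))
    (k : Fin n) (a : V k) (hocc : ∃ i, M i k = a) :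
    {i | M i k = a}.ncard = {i | M i k = perp k a}.ncard := by
  classical
  choose g hg using fun j => involutive_bool_section (perp j) (hinv j) (hnfix j)
  set s : ℝ := (Real.sqrt 2)⁻¹ with hsdef
  have hs2 : s ^ 2 = 2⁻¹ := by
    rw [hsdef, inv_pow, Real.sq_sqrt (by norm_num : (0:ℝ) ≤ 2)]
  set wk : V k → Fin 2 → ℝ := fun b =>
    if b = a then ![1, 0]
    else if b = perp k a then ![0, 1]
    else if g k b then ![s, s] else ![s, -s] with hwkdef
  set base : Bool → Fin 2 → ℝ := fun c => if c then ![1, 0] else ![0, 1] with hbase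
  set w : ∀ j, V j → Fin 2 → ℝ :=
    fun j => if h : j = k then (fun b => wk (h ▸ b)) else fun b => base (g j b) with hwdef
  have hwk : ∀ b : V k, w k b = wk b := by
    intro b
    show (if h : k = k then (fun b => wk (h ▸ b)) else fun b => base (g k b)) b = wk b
    rw [dif_pos rfl]
  have hwj : ∀ j, j ≠ k → ∀ b : V j, w j b = base (g j b) := by
    intro j hj b
    show (if h : j = k then (fun b => wk (h ▸ b)) else fun b => base (g j b)) b = base (g j b)
    rw [dif_neg hj]
  have hpa : perp k a ≠ a := hnfix k a
  have hap : a ≠ perp k a := hpa.symm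
  have hunit : ∀ j (b : V j), w j b 0 ^ 2 + w j b 1 ^ 2 = 1 := by
    intro j b
    by_cases h : j = k
    · subst h
      rw [hwk, hwkdef]
      by_cases h1 : b = a
      · simp [h1, hap]
      · by_cases h2 : b = perp j a
        · simp [h1, h2, hpa]
        · cases hgb : g j b <;> simp [h1, h2, hgb, hs2] <;> norm_num [hs2]
    · rw [hwj j h, hbase]
      cases g j b <;> norm_num
  have worth : ∀ j (b : V j),
      w j b 0 * w j (perp j b) 0 + w j b 1 * w j (perp j b) 1 = 0 := by
    intro j b
    by_cases h : j = k
    · subst h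
      rw [hwk, hwk, hwkdef]
      by_cases h1 : b = a
      · have h2 : perp j b ≠ a := by rw [h1]; exact hpa
        have h3 : perp j b = perp j a := by rw [h1]
        simp [h1, h2, h3, hap, hpa]
      · by_cases h2 : b = perp j a
        · have h3 : perp j b = a := by rw [h2, hinv]
          simp [h1, h2, hinv, hpa, hap]
        · have h3 : perp j b ≠ a := by
            intro h'; apply h2; rw [← h', hinv]
          have h4 : perp j b ≠ perp j a := by
            intro h'; apply h1
            have := congrArg (perp j) h'
            rwa [hinv, hinv] at this
          have h5 : g j (perp j b) = !g j b := hg j b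
          cases hgb : g j b <;> rw [hgb] at h5 <;>
            simp [h1, h2, h3, h4, h5, hgb] <;> ring
    · rw [hwj j h, hwj j h, hbase, hg j b]
      cases g j b <;> norm_num
  have hdiff : ∀ b : V k, wk b 0 ^ 2 - wk b 1 ^ 2
      = (if b = a then (1:ℝ) else 0) - (if b = perp k a then 1 else 0) := by
    intro b
    rw [hwkdef]
    by_cases h1 : b = a
    · have h2 : ¬ b = perp k a := by rw [h1]; exact hap
      simp [h1, h2, hap]
    · by_cases h2 : b = perp k a
      · simp [h1, h2, hpa]
      · cases hgb : g k b <;> simp [h1, h2, hgb] <;> ring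
  have hsum := key_sum n (fun i j => w j (M i j))
    (fun i j => hunit j (M i j))
    (by
      intro i i' hii
      obtain ⟨c, hc⟩ := horth i i' hii
      refine ⟨c, ?_⟩
      show w c (M i c) 0 * w c (M i' c) 0 + w c (M i c) 1 * w c (M i' c) 1 = 0
      rw [hc]
      linear_combination worth c (M i' c))
    k
  have hsum2 : ∑ i, ((if M i k = a then (1:ℝ) else 0) - (if M i k = perp k a then 1 else 0))
      = 0 := by
    calc ∑ i, ((if M i k = a then (1:ℝ) else 0) - (if M i k = perp k a then 1 else 0))
        = ∑ i, (w k (M i k) 0 ^ 2 - w k (M i k) 1 ^ 2) := by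
          refine Finset.sum_congr rfl fun i _ => ?_
          rw [hwk]
          exact (hdiff (M i k)).symm
      _ = 0 := hsum
  rw [Finset.sum_sub_distrib, sub_eq_zero, Finset.sum_boole, Finset.sum_boole] at hsum2
  have hcards : (univ.filter fun i => M i k = a).card
      = (univ.filter fun i => M i k = perp k a).card := by
    exact_mod_cast hsum2
  rw [show {i | M i k = a} = ((univ.filter fun i => M i k = a : Finset (Fin (2 ^ n))) : Set (Fin (2 ^ n))) by ext i; simp,
     show {i | M i k = perp k a} = ((univ.filter fun i => M i k = perp k a : Finset (Fin (2 ^ n))) : Set (Fin (2 ^ n))) by ext i; simp,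
     Set.ncard_coe_finset, Set.ncard_coe_finset, hcards]
end

section
/- In the combinatorial model of a 2-qubit OPB: let M be a 4 × 2 matrix whose columns take values in types V_1, V_2 each equipped with a fixed-point-free involution ⊥, such that any two distinct rows i,j satisfy M_{i,k} = (M_{j,k})^⊥ for some k ∈ {1,2}, and such that each value in column k can be realized by unit vectors in ℂ² (perpendicular values mapping to orthogonal vectors). Then at least one column of M contains exactly one pair {a, a^⊥} of values, i.e., some column has exactly 2 distinct values forming a perpendicular pair, each occurring twice. -/
private lemma fin2_pigeon : ∀ a b c : Fin 2, a = b ∨ a = c ∨ b = c := by decide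

private lemma fin2_third : ∀ a b c : Fin 2, a ≠ b → c ≠ b → a = c := by decide

private lemma key (V : Fin 2 → Type) (perp : ∀ k, V k → V k)
    (hinv : ∀ k a, perp k (perp k a) = a)
    (hnfix : ∀ k a, perp k a ≠ a)
    (M : Fin 4 → ∀ k, V k)
    (horth : ∀ i j, i ≠ j → ∃ k, M i k = perp k (M j k))
    (p i j l : Fin 4)
    (hcov : ∀ r : Fin 4, r = p ∨ r = i ∨ r = j ∨ r = l)
    (hij : i ≠ j) (hli : l ≠ i) (hlj : l ≠ j) (hpi : p ≠ i) (hpj : p ≠ j) (hpl : p ≠ l)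
    (k : Fin 2)
    (h1 : M i k = perp k (M p k)) (h2 : M j k = perp k (M p k)) :
    ∃ k : Fin 2, ∃ a : V k,
      (∀ i, M i k = a ∨ M i k = perp k a) ∧
      {i | M i k = a}.ncard = 2 ∧ {i | M i k = perp k a}.ncard = 2 := by
  have hji : M j k = M i k := h2.trans h1.symm
  have hp : M p k = perp k (M i k) := by rw [h1, hinv]
  obtain ⟨k1, hk1⟩ := horth i j hij
  have hk1k : k1 ≠ k := by
    intro h; subst h
    exact hnfix k1 (M j k1) (by rw [← hji] at hk1; exact hk1.symm)
  obtain ⟨k2, hk2⟩ := horth l i hli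
  obtain ⟨k3, hk3⟩ := horth l j hlj
  have hl : M l k = perp k (M i k) := by
    by_cases e2 : k2 = k
    · rw [e2] at hk2; exact hk2
    · have e2' : k2 = k1 := fin2_third _ _ _ e2 hk1k
      rw [e2'] at hk2
      by_cases e3 : k3 = k
      · rw [e3] at hk3; rw [hk3, hji]
      · have e3' : k3 = k1 := fin2_third _ _ _ e3 hk1k
        rw [e3'] at hk3
        exfalso
        have heq : M i k1 = M j k1 := by
          have := hk2.symm.trans hk3
          have := congrArg (perp k1) this
          rwa [hinv, hinv] at this
        rw [heq] at hk1
        exact hnfix k1 (M j k1) hk1.symm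
  have hne : perp k (M i k) ≠ M i k := hnfix k (M i k)
  refine ⟨k, M i k, ?_, ?_, ?_⟩
  · intro r
    rcases hcov r with h | h | h | h <;> rw [h]
    · exact Or.inr hp
    · exact Or.inl rfl
    · exact Or.inl hji
    · exact Or.inr hl
  · have hS : {r | M r k = M i k} = {i, j} := by
      ext r
      simp only [Set.mem_setOf_eq, Set.mem_insert_iff, Set.mem_singleton_iff]
      constructor
      · intro hr
        rcases hcov r with h | h | h | h
        · exfalso; rw [h, hp] at hr; exact hne hr
        · exact Or.inl h
        · exact Or.inr h
        · exfalso; rw [h, hl] at hr; exact hne hr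
      · rintro (rfl | rfl)
        · rfl
        · exact hji
    rw [hS, Set.ncard_pair hij]
  · have hS : {r | M r k = perp k (M i k)} = {p, l} := by
      ext r
      simp only [Set.mem_setOf_eq, Set.mem_insert_iff, Set.mem_singleton_iff]
      constructor
      · intro hr
        rcases hcov r with h | h | h | h
        · exact Or.inl h
        · exfalso; rw [h] at hr; exact hne hr.symm
        · exfalso; rw [h, hji] at hr; exact hne hr.symm
        · exact Or.inr h
      · rintro (rfl | rfl)
        · exact hp
        · exact hl
    rw [hS, Set.ncard_pair hpl]

/-- Combinatorial model of a 2-qubit orthogonal product basis: a `4 × 2` matrix with columns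
valued in types carrying fixed-point-free involutions, pairwise "orthogonal" rows, and values
realizable by unit vectors in `ℂ²` (perpendicular values going to orthogonal vectors). Then
some column consists of exactly one perpendicular pair `{a, aᗮ}`, each occurring twice. -/
theorem stmt10 (V : Fin 2 → Type) (perp : ∀ k, V k → V k)
    (hinv : ∀ k a, perp k (perp k a) = a)
    (hnfix : ∀ k a, perp k a ≠ a)
    (M : Fin 4 → ∀ k, V k)
    (horth : ∀ i j, i ≠ j → ∃ k, M i k = perp k (M j k))
    (hreal : ∀ k, ∃ f : V k → EuclideanSpace ℂ (Fin 2),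
      (∀ a, ‖f a‖ = 1) ∧ ∀ a, (inner ℂ (f a) (f (perp k a)) : ℂ) = 0) :
    ∃ k : Fin 2, ∃ a : V k,
      (∀ i, M i k = a ∨ M i k = perp k a) ∧
      {i | M i k = a}.ncard = 2 ∧ {i | M i k = perp k a}.ncard = 2 := by
  obtain ⟨k1, hk1⟩ := horth 1 0 (by decide)
  obtain ⟨k2, hk2⟩ := horth 2 0 (by decide)
  obtain ⟨k3, hk3⟩ := horth 3 0 (by decide)
  rcases fin2_pigeon k1 k2 k3 with h | h | h
  · rw [h] at hk1
    exact key V perp hinv hnfix M horth 0 1 2 3 (by decide) (by decide) (by decide)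
      (by decide) (by decide) (by decide) (by decide) k2 hk1 hk2
  · rw [h] at hk1
    exact key V perp hinv hnfix M horth 0 1 3 2 (by decide) (by decide) (by decide)
      (by decide) (by decide) (by decide) (by decide) k3 hk1 hk3
  · rw [h] at hk2
    exact key V perp hinv hnfix M horth 0 2 3 1 (by decide) (by decide) (by decide)
      (by decide) (by decide) (by decide) (by decide) k3 hk2 hk3
end
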